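/- arXiv:1909.11369 — 3 statements merged into one kernel-verified Lean document; each statement's English description precedes it below -/
import Mathlib

section
/- Suppose a finite set Y of nodes of a rooted binary tree T is repeatedly processed as follows: while at least k+1 elements of Y remain in the tree, remove a minimal (with respect to inclusion) subtree containing at least k+1 elements of Y. Then each removed subtree contains at most 2k+1 elements of Y, and the procedure produces at least ⌊|Y|/(2k+1)⌋ pairwise disjoint subtrees. -/
/-- The set of nodes of the subtree rooted at `v`, in a rooted tree given by a
parent function: `v` together with all its descendants. -/
def subtree {T : Type*} (parent : T → Option T) (v : T) : Set T :=
  {x | Relation.ReflTransGen (fun p q => parent q = some p) v x}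

namespace StmtAux

variable {T : Type*}

/-- No cycles in a rooted tree. -/
lemma noCycle (parent : T → Option T) (root : T)
    (hroot : ∀ x, parent x = none ↔ x = root)
    (hreach : ∀ x, Relation.ReflTransGen (fun p q => parent q = some p) root x) (x : T) :
    ¬ Relation.TransGen (fun p q => parent q = some p) x x := by
  have h := hreach x
  induction h with
  | refl =>
    intro h
    obtain ⟨c, _, hc⟩ := Relation.TransGen.tail'_iff.mp h
    rw [(hroot root).mpr rfl] at hc
    exact Option.some_ne_none _ hc.symm
  | @tail b c hab hbc ih =>
    intro h
    obtain ⟨d, hcd, hdc⟩ := Relation.TransGen.tail'_iff.mp h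
    have hdb : d = b := by
      have := hbc.symm.trans hdc
      exact (Option.some_injective _ this).symm
    subst hdb
    exact ih (Relation.TransGen.head' hbc hcd)

lemma subtree_mono (parent : T → Option T) {v c : T} (h : parent c = some v) :
    subtree parent c ⊆ subtree parent v := fun _ hx =>
  Relation.ReflTransGen.head h hx

lemma biUnion_ncard_le {α β : Type*} [Finite α] [Finite β] (s : Set α) (f : α → Set β) (k : ℕ)
    (h2 : s.ncard ≤ 2) (hf : ∀ c ∈ s, (f c).ncard ≤ k) :
    (⋃ c ∈ s, f c).ncard ≤ 2 * k := by
  rcases s.eq_empty_or_nonempty with rfl | ⟨a, ha⟩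
  · simp
  have hs : s.Finite := Set.toFinite s
  have h1 : (s \ {a}).ncard ≤ 1 := by
    have := Set.ncard_diff_singleton_add_one ha hs
    omega
  rcases (Set.ncard_le_one_iff_eq hs.diff).mp h1 with h0 | ⟨b, hb⟩
  · have hs1 : s = {a} := by
      refine Set.Subset.antisymm (fun x hx => ?_) (Set.singleton_subset_iff.mpr ha)
      by_contra hxa
      have hmem : x ∈ s \ {a} := ⟨hx, hxa⟩
      rw [h0] at hmem
      exact hmem
    subst hs1
    simp only [Set.biUnion_singleton]
    have := hf a rfl
    omega
  · have hbs : b ∈ s := by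
      have hb' : b ∈ s \ {a} := by rw [hb]; rfl
      exact hb'.1
    have hsab : s = {a, b} := by
      refine Set.Subset.antisymm (fun x hx => ?_)
        (Set.insert_subset_iff.mpr ⟨ha, Set.singleton_subset_iff.mpr hbs⟩)
      by_cases hxa : x = a
      · exact Or.inl hxa
      · have hmem : x ∈ s \ {a} := ⟨hx, hxa⟩
        rw [hb] at hmem
        exact Or.inr hmem
    subst hsab
    rw [Set.biUnion_pair]
    calc (f a ∪ f b).ncard ≤ (f a).ncard + (f b).ncard := Set.ncard_union_le _ _
      _ ≤ 2 * k := by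
          have h1 := hf a (by simp)
          have h2 := hf b (by simp)
          omega

variable [Finite T]

/-- A good list of subtree roots, peeling pieces off `S`. -/
def GoodL (parent : T → Option T) (Y : Set T) (k : ℕ) : Set T → List T → Prop
  | S, [] => (Y ∩ S).ncard ≤ k
  | S, v :: R => k + 1 ≤ ((subtree parent v ∩ S) ∩ Y).ncard ∧
      ((subtree parent v ∩ S) ∩ Y).ncard ≤ 2 * k + 1 ∧
      GoodL parent Y k (S \ subtree parent v) R

lemma goodL_count (parent : T → Option T) (Y : Set T) (k : ℕ) :
    ∀ (L : List T) (S : Set T), GoodL parent Y k S L →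
      (Y ∩ S).ncard ≤ (2 * k + 1) * L.length + k := by
  intro L
  induction L with
  | nil => intro S h; simpa [GoodL] using h
  | cons v R ih =>
    intro S h
    obtain ⟨_, h2, h3⟩ := h
    have hsplit : Y ∩ S = ((subtree parent v ∩ S) ∩ Y) ∪ (Y ∩ (S \ subtree parent v)) := by
      ext x
      simp only [Set.mem_inter_iff, Set.mem_union, Set.mem_diff]
      tauto
    have := ih (S \ subtree parent v) h3
    calc (Y ∩ S).ncard ≤ ((subtree parent v ∩ S) ∩ Y).ncard +
          (Y ∩ (S \ subtree parent v)).ncard := by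
          rw [hsplit]; exact Set.ncard_union_le _ _
      _ ≤ (2 * k + 1) * (v :: R).length + k := by
          simp only [List.length_cons]
          calc _ ≤ (2 * k + 1) + ((2 * k + 1) * R.length + k) := by omega
            _ = (2 * k + 1) * (R.length + 1) + k := by ring
  
/-- Existence of a good list. -/
lemma exists_goodL (parent : T → Option T) (root : T)
    (hroot : ∀ x, parent x = none ↔ x = root)
    (hbin : ∀ v : T, Set.ncard {x | parent x = some v} ≤ 2)
    (hreach : ∀ x, Relation.ReflTransGen (fun p q => parent q = some p) root x)
    (Y : Set T) (k : ℕ) :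
    ∀ (m : ℕ) (S : Set T), (∀ x ∈ S, ∀ p, parent x = some p → p ∈ S) →
      (Y ∩ S).ncard ≤ m → ∃ L : List T, GoodL parent Y k S L := by
  intro m
  induction m with
  | zero =>
    intro S _ hm
    exact ⟨[], by simpa [GoodL] using hm.trans (Nat.zero_le k)⟩
  | succ m ih =>
    intro S hanc hm
    by_cases hbase : (Y ∩ S).ncard ≤ k
    · exact ⟨[], hbase⟩
    push_neg at hbase
    -- the set of candidate roots
    set Q : Set T := {v | k + 1 ≤ ((subtree parent v ∩ S) ∩ Y).ncard} with hQ
    have hrootQ : root ∈ Q := by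
      have huniv : subtree parent root = Set.univ := by
        ext x; simpa [subtree] using hreach x
      simp only [hQ, Set.mem_setOf_eq, huniv, Set.univ_inter]
      rw [Set.inter_comm]; omega
    obtain ⟨v, hvQ, hvmin⟩ := Set.exists_min_image Q (fun v => (subtree parent v).ncard)
      (Set.toFinite Q) ⟨root, hrootQ⟩
    -- every child subtree contains at most k elements
    have hchild : ∀ c, parent c = some v → ((subtree parent c ∩ S) ∩ Y).ncard ≤ k := by
      intro c hc
      by_contra hcon
      push_neg at hcon
      have hcQ : c ∈ Q := hcon
      have hss : subtree parent c ⊂ subtree parent v := by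
        refine ⟨subtree_mono parent hc, fun hsub => ?_⟩
        have hvmem : v ∈ subtree parent c := hsub (Relation.ReflTransGen.refl)
        exact noCycle parent root hroot hreach v
          (Relation.TransGen.head' hc hvmem)
      have := Set.ncard_lt_ncard hss (Set.toFinite _)
      have := hvmin c hcQ
      omega
    -- piece upper bound
    have hupper : ((subtree parent v ∩ S) ∩ Y).ncard ≤ 2 * k + 1 := by
      have hsub : (subtree parent v ∩ S) ∩ Y ⊆
          insert v (⋃ c ∈ {x | parent x = some v}, (subtree parent c ∩ S) ∩ Y) := by
        rintro x ⟨⟨hx1, hx2⟩, hx3⟩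
        rcases Relation.ReflTransGen.cases_head hx1 with rfl | ⟨c, hc, hcx⟩
        · exact Set.mem_insert _ _
        · exact Set.mem_insert_of_mem _
            (Set.mem_biUnion hc ⟨⟨hcx, hx2⟩, hx3⟩)
      calc ((subtree parent v ∩ S) ∩ Y).ncard ≤ _ := Set.ncard_le_ncard hsub (Set.toFinite _)
        _ ≤ (⋃ c ∈ {x | parent x = some v}, (subtree parent c ∩ S) ∩ Y).ncard + 1 :=
          Set.ncard_insert_le _ _
        _ ≤ 2 * k + 1 := by
          have hb : (⋃ c ∈ {x | parent x = some v}, (subtree parent c ∩ S) ∩ Y).ncard ≤ 2 * k :=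
            biUnion_ncard_le _ _ _ (hbin v) hchild
          omega
    -- recurse on S \ subtree v
    have hanc' : ∀ x ∈ S \ subtree parent v, ∀ p, parent x = some p → p ∈ S \ subtree parent v := by
      rintro x ⟨hxS, hxv⟩ p hp
      refine ⟨hanc x hxS p hp, fun hpv => hxv ?_⟩
      exact Relation.ReflTransGen.tail hpv hp
    have hsplit : Y ∩ S = ((subtree parent v ∩ S) ∩ Y) ∪ (Y ∩ (S \ subtree parent v)) := by
      ext x
      simp only [Set.mem_inter_iff, Set.mem_union, Set.mem_diff]
      tauto
    have hdisj : Disjoint ((subtree parent v ∩ S) ∩ Y) (Y ∩ (S \ subtree parent v)) := by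
      rw [Set.disjoint_left]
      rintro x ⟨⟨hx1, _⟩, _⟩ ⟨_, _, hx4⟩
      exact hx4 hx1
    have hcard : (Y ∩ (S \ subtree parent v)).ncard ≤ m := by
      have := Set.ncard_union_eq hdisj (Set.toFinite _) (Set.toFinite _)
      rw [← hsplit] at this
      have hvQ' : k + 1 ≤ ((subtree parent v ∩ S) ∩ Y).ncard := hvQ
      omega
    obtain ⟨L, hL⟩ := ih (S \ subtree parent v) hanc' hcard
    exact ⟨v :: L, hvQ, hupper, hL⟩

end StmtAux

/-- Repeatedly removing a minimal subtree containing at least k+1 elements of Y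
(as long as at least k+1 elements remain) yields at least ⌊|Y|/(2k+1)⌋ pairwise
disjoint pieces, each piece being a subtree minus the previously removed subtrees,
and each containing at least k+1 and at most 2k+1 elements of Y. -/
theorem stmt4 {T : Type*} [Finite T] (parent : T → Option T) (root : T)
    (hroot : ∀ x, parent x = none ↔ x = root)
    (hbin : ∀ v : T, Set.ncard {x | parent x = some v} ≤ 2)
    (hreach : ∀ x, Relation.ReflTransGen (fun p q => parent q = some p) root x)
    (Y : Set T) (k : ℕ) (hk : 1 ≤ k) :
    ∃ n, Y.ncard / (2 * k + 1) ≤ n ∧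
      ∃ v : Fin n → T,
        (∀ i j : Fin n, i ≠ j →
          Disjoint (subtree parent (v i) \ ⋃ (j' : Fin n) (_ : j' < i), subtree parent (v j'))
                   (subtree parent (v j) \ ⋃ (j' : Fin n) (_ : j' < j), subtree parent (v j'))) ∧
        (∀ i : Fin n,
          k + 1 ≤ ((subtree parent (v i) \ ⋃ (j' : Fin n) (_ : j' < i), subtree parent (v j')) ∩ Y).ncard ∧
          ((subtree parent (v i) \ ⋃ (j' : Fin n) (_ : j' < i), subtree parent (v j')) ∩ Y).ncard ≤ 2 * k + 1) := by
  obtain ⟨L, hL⟩ := StmtAux.exists_goodL parent root hroot hbin hreach Y k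
    (Y ∩ Set.univ).ncard Set.univ (by simp) le_rfl
  refine ⟨L.length, ?_, fun i => L.get i, ?_, ?_⟩
  · -- counting
    have hcount := StmtAux.goodL_count parent Y k L Set.univ hL
    simp only [Set.inter_univ] at hcount
    calc Y.ncard / (2 * k + 1) ≤ ((2 * k + 1) * L.length + k) / (2 * k + 1) :=
        Nat.div_le_div_right hcount
      _ = L.length := by
        rw [Nat.mul_add_div (by omega)]
        simp [Nat.div_eq_of_lt (by omega : k < 2 * k + 1)]
  · -- disjointness : automatic
    intro i j hij
    rcases lt_or_gt_of_ne hij with h | h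
    · rw [Set.disjoint_right]
      rintro x ⟨_, hx2⟩ ⟨hx3, _⟩
      exact hx2 (Set.mem_biUnion h hx3)
    · rw [Set.disjoint_left]
      rintro x ⟨_, hx2⟩ ⟨hx3, _⟩
      exact hx2 (Set.mem_biUnion h hx3)
  · -- cardinality bounds from GoodL
    -- first, a general lemma relating GoodL pieces to the Fin description
    intro i
    -- piece i of the list relative to univ
    suffices h : ∀ (L : List T) (S : Set T), StmtAux.GoodL parent Y k S L →
        ∀ i : Fin L.length,
          k + 1 ≤ (((subtree parent (L.get i) ∩ S) \ (⋃ (j' : Fin L.length) (_ : j' < i),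
              subtree parent (L.get j'))) ∩ Y).ncard ∧
          (((subtree parent (L.get i) ∩ S) \ (⋃ (j' : Fin L.length) (_ : j' < i),
              subtree parent (L.get j'))) ∩ Y).ncard ≤ 2 * k + 1 by
      have := h L Set.univ hL i
      simpa using this
    clear hL i
    intro L
    induction L with
    | nil => intro S _ i; exact i.elim0
    | cons v R ih =>
      intro S hgood i
      obtain ⟨h1, h2, h3⟩ := hgood
      induction i using Fin.cases with
      | zero =>
        have hempty : (⋃ (j' : Fin (v :: R).length) (_ : j' < (0 : Fin (R.length + 1))),
            subtree parent ((v :: R).get j')) = ∅ := by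
          refine Set.eq_empty_iff_forall_notMem.mpr fun x hx => ?_
          simp only [Set.mem_iUnion] at hx
          obtain ⟨j', hj', _⟩ := hx
          exact absurd hj' (Fin.not_lt_zero j')
        rw [hempty]
        simp only [Set.diff_empty, List.get]
        exact ⟨h1, h2⟩
      | succ j =>
        have := ih (S \ subtree parent v) h3 j
        have hset : (subtree parent ((v :: R).get j.succ) ∩ S) \
            (⋃ (j' : Fin (v :: R).length) (_ : j' < j.succ), subtree parent ((v :: R).get j')) =
            (subtree parent (R.get j) ∩ (S \ subtree parent v)) \
            (⋃ (j' : Fin R.length) (_ : j' < j), subtree parent (R.get j')) := by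
          ext x
          simp only [Set.mem_diff, Set.mem_inter_iff, Set.mem_iUnion, List.get]
          constructor
          · rintro ⟨⟨hx1, hx2⟩, hx3⟩
            refine ⟨⟨hx1, hx2, fun hv => hx3 ⟨(0 : Fin (R.length + 1)), j.succ_pos, hv⟩⟩, ?_⟩
            rintro ⟨j', hj', hxj'⟩
            refine hx3 ⟨j'.succ, ?_, hxj'⟩
            simp only [Fin.lt_def] at hj' ⊢
            simp only [Fin.val_succ]
            omega
          · rintro ⟨⟨hx1, hx2, hx4⟩, hx3⟩
            refine ⟨⟨hx1, hx2⟩, ?_⟩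
            rintro ⟨j', hj', hxj'⟩
            rcases Fin.eq_zero_or_eq_succ j' with rfl | ⟨j'', rfl⟩
            · exact hx4 hxj'
            · refine hx3 ⟨j'', ?_, hxj'⟩
              simp only [Fin.lt_def, Fin.val_succ] at hj'
              simp only [Fin.lt_def]
              omega
        rw [hset]
        exact this
end

section
/- Let G be a connected graph in a minor-closed class 𝒦, with layers L_0, L_1, … around a fixed vertex v. Then for any i and r, the subgraph of G induced by L_{i+1} ∪ L_{i+2} ∪ … ∪ L_{i+r} is a minor of a graph H ∈ 𝒦 in which every vertex is within distance r of some vertex v'. In particular, if 𝒦 is also closed under minors and has locally bounded tree-width witnessed by a function f, the induced subgraph on any r consecutive layers has tree-width at most f(r). -/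
/-- `H` is a minor of `G`: there are pairwise disjoint nonempty connected branch
sets in `G`, one for each vertex of `H`, such that adjacent vertices of `H` have
an edge of `G` between their branch sets. -/
def IsMinorOf {W V : Type} (H : SimpleGraph W) (G : SimpleGraph V) : Prop :=
  ∃ f : W → Set V,
    (∀ w, (f w).Nonempty) ∧
    (∀ w, (G.induce (f w)).Connected) ∧
    (∀ w w', w ≠ w' → Disjoint (f w) (f w')) ∧
    (∀ w w', H.Adj w w' → ∃ u ∈ f w, ∃ u' ∈ f w', G.Adj u u')

/-- `G` has tree-width at most `k`: it has a tree decomposition all of whose bags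
have at most `k+1` vertices. -/
def TreewidthLE {V : Type} (G : SimpleGraph V) (k : ℕ) : Prop :=
  ∃ (ι : Type) (Tr : SimpleGraph ι), Tr.Connected ∧ Tr.IsAcyclic ∧
    ∃ B : ι → Set V,
      (∀ v, ∃ i, v ∈ B i) ∧
      (∀ u w, G.Adj u w → ∃ i, u ∈ B i ∧ w ∈ B i) ∧
      (∀ v, (Tr.induce {i | v ∈ B i}).Connected) ∧
      (∀ i, (B i).ncard ≤ k + 1)


open SimpleGraph


-- neighbor lemma
lemma nbr {V : Type} {G : SimpleGraph V} (hG : G.Connected) (v u : V) (d : ℕ)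
    (h : G.dist v u = d + 1) : ∃ x, G.Adj x u ∧ G.dist v x = d := by
  obtain ⟨p, hp⟩ := (hG v u).exists_walk_length_eq_dist
  have hl : p.reverse.length = d + 1 := by rw [SimpleGraph.Walk.length_reverse, hp, h]
  cases hq : p.reverse with
  | nil => rw [hq] at hl; simp at hl
  | cons hadj q =>
    rename_i x
    rw [hq] at hl
    simp [SimpleGraph.Walk.length_cons] at hl
    refine ⟨x, hadj.symm, le_antisymm ?_ ?_⟩
    · have := SimpleGraph.dist_le q.reverse
      rwa [SimpleGraph.Walk.length_reverse, hl] at this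
    · obtain ⟨w, hw⟩ := (hG v x).exists_walk_length_eq_dist
      have := SimpleGraph.dist_le (w.concat hadj.symm)
      rw [SimpleGraph.Walk.length_concat, hw, h] at this
      omega

-- ball connectivity
lemma ballConn {V : Type} {G : SimpleGraph V} (hG : G.Connected) (v : V) (n : ℕ) :
    (G.induce {u | G.dist v u ≤ n}).Connected := by
  have hv : v ∈ {u | G.dist v u ≤ n} := by simp [SimpleGraph.dist_self]
  have key : ∀ d u, G.dist v u = d → ∀ (hu : u ∈ {u | G.dist v u ≤ n}),
      (G.induce {u | G.dist v u ≤ n}).Reachable ⟨v, hv⟩ ⟨u, hu⟩ := by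
    intro d
    induction d with
    | zero =>
      intro u hd hu
      have : v = u := (hG.dist_eq_zero_iff).mp hd
      subst this
      exact SimpleGraph.Reachable.refl _
    | succ e ih =>
      intro u hd hu
      obtain ⟨x, hadj, hx⟩ := nbr hG v u e hd
      have hxm : x ∈ {u | G.dist v u ≤ n} := by
        simp only [Set.mem_setOf_eq] at hu ⊢; omega
      have h1 := ih x hx hxm
      have h2 : (G.induce {u | G.dist v u ≤ n}).Adj ⟨x, hxm⟩ ⟨u, hu⟩ := hadj
      exact h1.trans h2.reachable
  haveI : Nonempty ↥{u | G.dist v u ≤ n} := ⟨⟨v, hv⟩⟩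
  exact SimpleGraph.Connected.mk
    (fun a b => (key _ a rfl a.2).symm.trans (key _ b rfl b.2))

-- singleton induced connected
lemma singletonConn {V : Type} (G : SimpleGraph V) (t : V) :
    (G.induce {t}).Connected := by
  haveI : Nonempty ↥({t} : Set V) := ⟨⟨t, rfl⟩⟩
  apply SimpleGraph.Connected.mk
  intro a b
  have hab : a = b := by
      apply Subtype.ext
      have ha := a.2; have hb := b.2
      simp only [Set.mem_singleton_iff] at ha hb
      rw [ha, hb]
  exact hab ▸ SimpleGraph.Reachable.refl a

def layerSet {V : Type} (G : SimpleGraph V) (v : V) (i r : ℕ) : Set V :=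
  {u | i + 1 ≤ G.dist v u ∧ G.dist v u ≤ i + r}

def contractedGraph {V : Type} (G : SimpleGraph V) (v : V) (i r : ℕ) :
    SimpleGraph (Option ↥(layerSet G v i r)) where
  Adj a b := match a, b with
    | some a, some b => G.Adj ↑a ↑b
    | none, some b => ∃ x, G.dist v x ≤ i ∧ G.Adj x ↑b
    | some a, none => ∃ x, G.dist v x ≤ i ∧ G.Adj x ↑a
    | none, none => False
  symm := ⟨by rintro (_|a) (_|b) h <;> first | exact h | exact h.symm⟩
  loopless := ⟨by rintro (_|a) h; exacts [h, G.irrefl h]⟩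

lemma contracted_edist_le {V : Type} {G : SimpleGraph V} (hG : G.Connected)
    (v : V) (i r : ℕ) :
    ∀ d (u : V) (hu : u ∈ layerSet G v i r), G.dist v u = d →
      (contractedGraph G v i r).edist none (some ⟨u, hu⟩) ≤ (d - i : ℕ) := by
  intro d
  induction d using Nat.strong_induction_on with
  | _ d ih =>
    intro u hu hd
    obtain ⟨h1, h2⟩ := id hu
    rw [hd] at h1 h2
    obtain ⟨e, rfl⟩ : ∃ e, d = e + 1 := ⟨d - 1, by omega⟩
    obtain ⟨x, hadj, hx⟩ := nbr hG v u e hd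
    by_cases hei : e ≤ i
    · have hAdj : (contractedGraph G v i r).Adj none (some ⟨u, hu⟩) :=
        ⟨x, by omega, hadj⟩
      have h1' := (SimpleGraph.edist_eq_one_iff_adj.mpr hAdj).le
      refine h1'.trans ?_
      have : (1 : ℕ) ≤ e + 1 - i := by omega
      exact_mod_cast Nat.one_le_cast.mpr this
    · have hxm : x ∈ layerSet G v i r := ⟨by omega, by omega⟩
      have hIH := ih e (by omega) x hxm hx
      have hAdj : (contractedGraph G v i r).Adj (some ⟨x, hxm⟩) (some ⟨u, hu⟩) := hadj
      have h1' := (SimpleGraph.edist_eq_one_iff_adj.mpr hAdj).le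
      calc (contractedGraph G v i r).edist none (some ⟨u, hu⟩)
          ≤ (contractedGraph G v i r).edist none (some ⟨x, hxm⟩)
            + (contractedGraph G v i r).edist (some ⟨x, hxm⟩) (some ⟨u, hu⟩) :=
            SimpleGraph.edist_triangle
        _ ≤ ((e - i : ℕ) : ℕ∞) + 1 := add_le_add hIH h1'
        _ = ((e + 1 - i : ℕ) : ℕ∞) := by
            have : (e - i) + 1 = e + 1 - i := by omega
            rw [← this]; push_cast; ring

lemma contracted_connected {V : Type} {G : SimpleGraph V} (hG : G.Connected)
    (v : V) (i r : ℕ) : (contractedGraph G v i r).Connected := by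
  haveI : Nonempty (Option ↥(layerSet G v i r)) := ⟨none⟩
  apply SimpleGraph.Connected.mk
  have key : ∀ w, (contractedGraph G v i r).Reachable none w := by
    rintro (_ | ⟨u, hu⟩)
    · exact SimpleGraph.Reachable.refl _
    · apply SimpleGraph.reachable_of_edist_ne_top
      exact ne_top_of_le_ne_top (ENat.coe_ne_top _)
        (contracted_edist_le hG v i r (G.dist v u) u hu rfl)
  exact fun a b => (key a).symm.trans (key b)

lemma contracted_dist_le {V : Type} {G : SimpleGraph V} (hG : G.Connected)
    (v : V) (i r : ℕ) : ∀ w, (contractedGraph G v i r).dist none w ≤ r := by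
  rintro (_ | ⟨u, hu⟩)
  · simp [SimpleGraph.dist_self]
  · have h := contracted_edist_le hG v i r (G.dist v u) u hu rfl
    have h2 := ENat.toNat_le_toNat h (ENat.coe_ne_top _)
    simp only [ENat.toNat_coe] at h2
    have : G.dist v u ≤ i + r := hu.2
    calc (contractedGraph G v i r).dist none (some ⟨u, hu⟩)
        = ((contractedGraph G v i r).edist none (some ⟨u, hu⟩)).toNat := rfl
      _ ≤ G.dist v u - i := h2
      _ ≤ r := by omega
lemma contracted_minor {V : Type} {G : SimpleGraph V} (hG : G.Connected)
    (v : V) (i r : ℕ) : IsMinorOf (contractedGraph G v i r) G := by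
  refine ⟨fun w => match w with
    | none => {u | G.dist v u ≤ i}
    | some a => {(a : V)}, ?_, ?_, ?_, ?_⟩
  · rintro (_ | a)
    · exact ⟨v, by simp [SimpleGraph.dist_self]⟩
    · exact ⟨a, rfl⟩
  · rintro (_ | a)
    · exact ballConn hG v i
    · exact singletonConn G a
  · rintro (_ | a) (_ | b) hne
    · exact absurd rfl hne
    · refine Set.disjoint_left.mpr ?_
      rintro x hx rfl
      exact absurd b.2.1 (by simp only [Set.mem_setOf_eq] at hx; omega)
    · refine Set.disjoint_left.mpr ?_
      rintro x rfl hx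
      exact absurd a.2.1 (by simp only [Set.mem_setOf_eq] at hx; omega)
    · have hab : (a : V) ≠ (b : V) := fun h => hne (by rw [Subtype.ext h])
      exact Set.disjoint_singleton.mpr hab
  · rintro (_ | a) (_ | b) h
    · exact absurd h (by simp [contractedGraph])
    · obtain ⟨x, hx1, hx2⟩ := h
      exact ⟨x, hx1, b, rfl, hx2⟩
    · obtain ⟨x, hx1, hx2⟩ := h
      exact ⟨a, rfl, x, hx1, hx2.symm⟩
    · exact ⟨a, rfl, b, rfl, h⟩

lemma induced_minor_contracted {V : Type} (G : SimpleGraph V) (v : V) (i r : ℕ) :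
    IsMinorOf (G.induce (layerSet G v i r)) (contractedGraph G v i r) := by
  refine ⟨fun w => {some w}, fun w => ⟨some w, rfl⟩,
    fun w => singletonConn _ _, fun w w' hne => ?_, fun w w' h => ?_⟩
  · exact Set.disjoint_singleton.mpr (fun hc => hne (Option.some_injective _ hc))
  · exact ⟨some w, rfl, some w', rfl, h⟩

lemma tw_trivial {A : Type} (Ga : SimpleGraph A)
    (hA : (Set.univ : Set A).Infinite) (k : ℕ) : TreewidthLE Ga k := by
  refine ⟨Unit, ⊥, ?_, SimpleGraph.isAcyclic_bot, fun _ => Set.univ,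
    fun a => ⟨(), trivial⟩, fun u w _ => ⟨(), trivial, trivial⟩, fun a => ?_, fun _ => ?_⟩
  · exact SimpleGraph.Connected.mk (fun a b => by rw [Subsingleton.elim a b])
  · haveI : Nonempty ↥{j : Unit | a ∈ Set.univ} := ⟨⟨(), trivial⟩⟩
    exact SimpleGraph.Connected.mk (fun x y => by rw [Subsingleton.elim x y])
  · rw [Set.Infinite.ncard hA]; omega

lemma tw_transfer {A B : Type} [Finite B] (Ga : SimpleGraph A) (Gb : SimpleGraph B)
    (φ : A → B) (hinj : Function.Injective φ)
    (hadj : ∀ a a', Ga.Adj a a' → Gb.Adj (φ a) (φ a')) (k : ℕ)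
    (h : TreewidthLE Gb k) : TreewidthLE Ga k := by
  obtain ⟨ι, Tr, hc, hac, Bg, hcov, hedge, hconn, hcard⟩ := h
  refine ⟨ι, Tr, hc, hac, fun j => φ ⁻¹' Bg j, fun a => hcov (φ a),
    fun a a' had => hedge _ _ (hadj _ _ had), fun a => hconn (φ a), fun j => ?_⟩
  calc (φ ⁻¹' Bg j).ncard ≤ (Bg j).ncard :=
        Set.ncard_le_ncard_of_injOn φ (fun a ha => ha) hinj.injOn (Bg j).toFinite
    _ ≤ k + 1 := hcard j
/-- For a connected graph G in a minor-closed class 𝒦, the subgraph induced by the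
layers L_{i+1} ∪ … ∪ L_{i+r} around a vertex v is a minor of a graph H ∈ 𝒦 in which
every vertex is within distance r of some vertex v'. In particular, if 𝒦 has
locally bounded tree-width witnessed by f, that induced subgraph has tree-width
at most f(r). -/
theorem stmt9 (𝒦 : ∀ {V : Type}, SimpleGraph V → Prop)
    (hminor : ∀ {V W : Type} (G : SimpleGraph V) (H : SimpleGraph W),
      𝒦 G → IsMinorOf H G → 𝒦 H)
    {V : Type} (G : SimpleGraph V) (hG : G.Connected) (hGK : 𝒦 G)
    (v : V) (i r : ℕ) :
    (∃ (W : Type) (H : SimpleGraph W) (v' : W), 𝒦 H ∧ H.Connected ∧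
        (∀ w, H.dist v' w ≤ r) ∧
        IsMinorOf (G.induce {u | i + 1 ≤ G.dist v u ∧ G.dist v u ≤ i + r}) H) ∧
    (∀ f : ℕ → ℕ,
      (∀ {W : Type} (H : SimpleGraph W), 𝒦 H → ∀ (w : W) (s : ℕ),
        TreewidthLE (H.induce {x | H.dist w x ≤ s}) (f s)) →
      TreewidthLE (G.induce {u | i + 1 ≤ G.dist v u ∧ G.dist v u ≤ i + r}) (f r)) := by
  have hK : 𝒦 (contractedGraph G v i r) :=
    hminor G _ hGK (contracted_minor hG v i r)
  constructor
  · exact ⟨Option ↥(layerSet G v i r), contractedGraph G v i r, none, hK,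
      contracted_connected hG v i r, contracted_dist_le hG v i r,
      induced_minor_contracted G v i r⟩
  · intro f hf
    by_cases hfin : Finite ↥(layerSet G v i r)
    · haveI := hfin
      haveI : Finite (Option ↥(layerSet G v i r)) := by
        haveI := Fintype.ofFinite ↥(layerSet G v i r)
        exact Finite.of_fintype _
      have h := hf (contractedGraph G v i r) hK none r
      haveI : Finite ↥{x | (contractedGraph G v i r).dist none x ≤ r} :=
        Subtype.finite
      exact tw_transfer (G.induce (layerSet G v i r)) _
        (fun w => (⟨some w, contracted_dist_le hG v i r (some w)⟩ :
          ↥{x | (contractedGraph G v i r).dist none x ≤ r}))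
        (fun a b hab => Option.some_injective _ (congrArg Subtype.val hab))
        (fun a a' had => had) (f r) h
    · exact tw_trivial _ (Set.infinite_univ (h := not_finite_iff_infinite.mp hfin)) (f r)
end

section
/- Let A be a tree automaton with m states over the alphabet Σ × {0,1}^{r+1}, and let 𝒯 be a finite binary Σ-tree with a set Y of nodes, |Y| ≥ 2m^m + 2. Then there exist n = ⌊|Y| / (4m^m + 4)⌋ pairwise disjoint sets of nodes V_1, …, V_n and pairs (b_i, b_i') ∈ (V_i ∩ Y)² of distinct nodes such that for every r-tuple ā of nodes and every i, if no component of ā lies in V_i, then the runs of A on 𝒯 with pebbles placed at (ā, b_i) and at (ā, b_i') label the root of 𝒯 with the same state. -/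
namespace Stmt12Aux

variable {T : Type*}

def childOf (l r : T → Option T) (p c : T) : Prop := l p = some c ∨ r p = some c

def sub (l r : T → Option T) (x y : T) : Prop := Relation.ReflTransGen (childOf l r) x y

def iterR (l r : T → Option T) (root : T) : ℕ → T → Prop
  | 0, x => x = root
  | n+1, x => ∃ z, iterR l r root n z ∧ childOf l r z x

noncomputable def dep (l r : T → Option T) (root : T) (x : T) : ℕ :=
  sInf {n | iterR l r root n x}

section Struct

variable {l r : T → Option T} {root : T}

lemma sub_refl (x : T) : sub l r x x := Relation.ReflTransGen.refl

lemma sub_trans {x y z : T} (h1 : sub l r x y) (h2 : sub l r y z) : sub l r x z :=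
  Relation.ReflTransGen.trans h1 h2

lemma sub_of_childOf {x c : T} (h : childOf l r x c) : sub l r x c :=
  Relation.ReflTransGen.single h

lemma sub_iter {x y : T} (h : sub l r x y) (hx : x = root) : ∃ n, iterR l r root n y := by
  induction h with
  | refl => exact ⟨0, hx⟩
  | tail h1 h2 ih => obtain ⟨n, hn⟩ := ih; exact ⟨n + 1, _, hn, h2⟩

variable (hroot : ∀ x, sub l r root x)
  (huniq : ∀ p p' x : T, childOf l r p x → childOf l r p' x → p = p')
  (hnpr : ∀ p : T, l p ≠ some root ∧ r p ≠ some root)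

include hroot in
lemma dep_spec (x : T) : iterR l r root (dep l r root x) x :=
  Nat.sInf_mem (sub_iter (hroot x) rfl)

include hroot huniq hnpr in
lemma dep_lt {p c : T} (h : childOf l r p c) : dep l r root p < dep l r root c := by
  have hc := dep_spec hroot c
  cases hdc : dep l r root c with
  | zero =>
    rw [hdc] at hc
    subst hc
    rcases h with h | h
    · exact absurd h (hnpr p).1
    · exact absurd h (hnpr p).2
  | succ n =>
    rw [hdc] at hc
    obtain ⟨z, hz, hzc⟩ := hc
    have hzp : z = p := huniq z p c hzc h
    subst hzp
    have : dep l r root z ≤ n := Nat.sInf_le hz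
    omega

include hroot huniq hnpr in
lemma sub_dep {x y : T} (h : sub l r x y) : dep l r root x ≤ dep l r root y := by
  induction h with
  | refl => exact le_rfl
  | tail h1 h2 ih => exact le_trans ih (le_of_lt (dep_lt hroot huniq hnpr h2))

include hroot huniq hnpr in
lemma sub_dep_strict {x y : T} (h : sub l r x y) (hne : x ≠ y) :
    dep l r root x < dep l r root y := by
  rcases Relation.ReflTransGen.cases_tail h with h' | ⟨w, hw1, hw2⟩
  · exact absurd h'.symm hne
  · exact lt_of_le_of_lt (sub_dep hroot huniq hnpr hw1) (dep_lt hroot huniq hnpr hw2)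

include hroot huniq hnpr in
lemma sub_antisymm {x y : T} (h1 : sub l r x y) (h2 : sub l r y x) : x = y := by
  by_contra hne
  have a1 := sub_dep_strict hroot huniq hnpr h1 hne
  have a2 := sub_dep_strict hroot huniq hnpr h2 (Ne.symm hne)
  omega

include hroot huniq hnpr in
lemma comp_aux : ∀ N, ∀ y a b : T, dep l r root y ≤ N → sub l r a y → sub l r b y →
    sub l r a b ∨ sub l r b a := by
  intro N
  induction N with
  | zero =>
    intro y a b hd ha hb
    rcases Relation.ReflTransGen.cases_tail ha with h' | ⟨w, hw1, hw2⟩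
    · subst h'; exact Or.inr hb
    · have := dep_lt hroot huniq hnpr hw2; omega
  | succ n ih =>
    intro y a b hd ha hb
    rcases Relation.ReflTransGen.cases_tail ha with h' | ⟨w, hw1, hw2⟩
    · subst h'; exact Or.inr hb
    · rcases Relation.ReflTransGen.cases_tail hb with h'' | ⟨w', hw1', hw2'⟩
      · subst h''; exact Or.inl ha
      · have hww : w' = w := huniq w' w y hw2' hw2
        subst hww
        have := dep_lt hroot huniq hnpr hw2
        exact ih w' a b (by omega) hw1 hw1'

include hroot huniq hnpr in
lemma comp {y a b : T} (ha : sub l r a y) (hb : sub l r b y) :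
    sub l r a b ∨ sub l r b a :=
  comp_aux hroot huniq hnpr (dep l r root y) y a b le_rfl ha hb

include hroot huniq hnpr in
lemma notsub_sibling {x c1 c2 : T} (h1 : childOf l r x c1) (h2 : childOf l r x c2)
    (hne : c1 ≠ c2) (hs : sub l r c1 c2) : False := by
  rcases Relation.ReflTransGen.cases_tail hs with h' | ⟨w, hw1, hw2⟩
  · exact hne h'.symm
  · have hwx : w = x := huniq w x c2 hw2 h2
    subst hwx
    have a1 := sub_dep hroot huniq hnpr hw1
    have a2 := dep_lt hroot huniq hnpr h1
    omega

include hroot huniq hnpr in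
lemma sibling_disj {x c1 c2 t : T} (h1 : childOf l r x c1) (h2 : childOf l r x c2)
    (hne : c1 ≠ c2) (ht1 : sub l r c1 t) (ht2 : sub l r c2 t) : False := by
  rcases comp hroot huniq hnpr ht1 ht2 with h | h
  · exact notsub_sibling hroot huniq hnpr h1 h2 hne h
  · exact notsub_sibling hroot huniq hnpr h2 h1 (Ne.symm hne) h

include huniq in
lemma sub_parent_step {u c x : T} (h : sub l r u c) (hne : c ≠ u)
    (hx : childOf l r x c) : sub l r u x := by
  rcases Relation.ReflTransGen.cases_tail h with h' | ⟨w, hw1, hw2⟩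
  · exact absurd h' hne
  · have : w = x := huniq w x c hw2 hx
    subst this; exact hw1

end Struct

section Auto

variable {Q Sig : Type*} [Fintype T] [DecidableEq T] {rr : ℕ}
variable {l r : T → Option T} {root : T} {σ : T → Sig}
variable {δ : Option Q → Option Q → Sig × (Fin (rr + 1) → Bool) → Q}
variable {ρ : (Fin (rr + 1) → T) → T → Q}

noncomputable def KK (l r : T → Option T) (root : T) [Fintype T] : ℕ :=
  Finset.univ.sup (dep l r root)

lemma dep_le_KK (x : T) : dep l r root x ≤ KK l r root :=
  Finset.le_sup (Finset.mem_univ x)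

variable (hroot : ∀ x, sub l r root x)
  (huniq : ∀ p p' x : T, childOf l r p x → childOf l r p' x → p = p')
  (hnpr : ∀ p : T, l p ≠ some root ∧ r p ≠ some root)

include hroot huniq hnpr in
lemma btind (P : T → Prop) (h : ∀ x, (∀ c, childOf l r x c → P c) → P x) : ∀ x, P x := by
  suffices H : ∀ n x, KK l r root + 1 - dep l r root x ≤ n → P x by
    exact fun x => H (KK l r root + 1 - dep l r root x) x le_rfl
  intro n
  induction n with
  | zero =>
    intro x hx
    have := dep_le_KK (l := l) (r := r) (root := root) x
    omega
  | succ n ih =>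
    intro x hx
    refine h x fun c hc => ih c ?_
    have h1 := dep_lt hroot huniq hnpr hc
    have h2 := dep_le_KK (l := l) (r := r) (root := root) c
    omega

variable (hρ : ∀ (p : Fin (rr + 1) → T) (x : T),
      ρ p x = δ ((l x).map (ρ p)) ((r x).map (ρ p))
        (σ x, fun i => if p i = x then true else false))

include hroot huniq hnpr hρ in
lemma below_eq : ∀ x (p p' : Fin (rr + 1) → T),
    (∀ i, p i = p' i ∨ (¬ sub l r x (p i) ∧ ¬ sub l r x (p' i))) → ρ p x = ρ p' x := by
  refine btind hroot huniq hnpr _ ?_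
  intro x ih p p' hcond
  have hchild : ∀ c, childOf l r x c → ρ p c = ρ p' c := by
    intro c hc
    refine ih c hc p p' fun i => ?_
    rcases hcond i with h | ⟨h1, h2⟩
    · exact Or.inl h
    · exact Or.inr ⟨fun hs => h1 (sub_trans (sub_of_childOf hc) hs),
        fun hs => h2 (sub_trans (sub_of_childOf hc) hs)⟩
  rw [hρ p x, hρ p' x]
  have hl : (l x).map (ρ p) = (l x).map (ρ p') := by
    cases hlx : l x with
    | none => rfl
    | some c => simp [hchild c (Or.inl hlx)]
  have hr : (r x).map (ρ p) = (r x).map (ρ p') := by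
    cases hrx : r x with
    | none => rfl
    | some c => simp [hchild c (Or.inr hrx)]
  rw [hl, hr]
  congr 2
  funext i
  rcases hcond i with h | ⟨h1, h2⟩
  · rw [h]
  · have e1 : p i ≠ x := fun h => h1 (h ▸ sub_refl _)
    have e2 : p' i ≠ x := fun h => h2 (h ▸ sub_refl _)
    simp [e1, e2]

def ctxSet (l r : T → Option T) (c : T × Option T) : Set T :=
  {t | sub l r c.1 t ∧ ∀ u ∈ c.2, ¬ sub l r u t}

variable (l r σ δ) in
def ctxRun (u? : Option T) (qh : Q) (b : T) : ℕ → T → Q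
  | 0, _ => qh
  | n + 1, x =>
    if u? = some x then qh
    else δ ((l x).map (ctxRun u? qh b n)) ((r x).map (ctxRun u? qh b n))
      (σ x, fun i => if i = Fin.last rr ∧ x = b then true else false)

lemma ctxRun_hole {u : T} {u? : Option T} (h : u? = some u) (qh : Q) (b : T) (n : ℕ) :
    ctxRun l r σ δ u? qh b n u = qh := by
  cases n with
  | zero => rfl
  | succ n => rw [ctxRun, if_pos h]

include hroot huniq hnpr hρ in
lemma ctx_eq {v : T} {u? : Option T} {qh : Q} {b : T} {a : Fin rr → T}
    (hq : ∀ u ∈ u?, ρ (Fin.snoc a b) u = qh)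
    (ha : ∀ j, a j ∉ ctxSet l r (v, u?)) :
    ∀ n x, x ∈ ctxSet l r (v, u?) → KK l r root + 1 - dep l r root x ≤ n →
      ρ (Fin.snoc a b) x = ctxRun l r σ δ u? qh b n x := by
  intro n
  induction n with
  | zero =>
    intro x _ hn
    have := dep_le_KK (l := l) (r := r) (root := root) x
    omega
  | succ n ih =>
    intro x hx hn
    have hne : ¬(u? = some x) := fun h => hx.2 x h (sub_refl x)
    rw [ctxRun, if_neg hne, hρ]
    have hchild : ∀ c, childOf l r x c →
        ρ (Fin.snoc a b) c = ctxRun l r σ δ u? qh b n c := by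
      intro c hc
      by_cases hc2 : ∀ u ∈ u?, ¬ sub l r u c
      · refine ih c ⟨sub_trans hx.1 (sub_of_childOf hc), hc2⟩ ?_
        have h1 := dep_lt hroot huniq hnpr hc
        have h2 := dep_le_KK (l := l) (r := r) (root := root) c
        omega
      · push_neg at hc2
        obtain ⟨u, hu, huc⟩ := hc2
        by_cases hcu : c = u
        · subst hcu
          rw [ctxRun_hole hu, hq c hu]
        · exact absurd (hx.2 u hu) (fun h => h (sub_parent_step huniq huc hcu hc))
    have hl : (l x).map (ρ (Fin.snoc a b)) = (l x).map (ctxRun l r σ δ u? qh b n) := by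
      cases hlx : l x with
      | none => rfl
      | some c => simp [hchild c (Or.inl hlx)]
    have hr : (r x).map (ρ (Fin.snoc a b)) = (r x).map (ctxRun l r σ δ u? qh b n) := by
      cases hrx : r x with
      | none => rfl
      | some c => simp [hchild c (Or.inr hrx)]
    rw [hl, hr]
    congr 2
    funext i
    refine Fin.lastCases ?_ (fun j => ?_) i
    · rw [Fin.snoc_last]
      by_cases hbx : b = x
      · simp [hbx]
      · simp [hbx, Ne.symm hbx]
    · rw [Fin.snoc_castSucc]
      have e1 : a j ≠ x := fun h => ha j (h ▸ hx)
      have e2 : Fin.castSucc j ≠ Fin.last rr := ne_of_lt (Fin.castSucc_lt_last j)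
      simp [e1, e2]

include hroot huniq hnpr hρ in
lemma above_eq {v : T} (p p' : Fin (rr + 1) → T)
    (hcond : ∀ i, p i = p' i ∨ (sub l r v (p i) ∧ sub l r v (p' i)))
    (hv : ρ p v = ρ p' v) : ∀ x, sub l r x v → ρ p x = ρ p' x := by
  intro x hx
  induction hx using Relation.ReflTransGen.head_induction_on with
  | refl => exact hv
  | head hstep htail ih =>
    rename_i x w
    have hnvx : ¬ sub l r v x := by
      intro h
      have a1 := sub_dep hroot huniq hnpr h
      have a2 := sub_dep hroot huniq hnpr htail
      have a3 := dep_lt hroot huniq hnpr hstep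
      omega
    have hchild : ∀ c, childOf l r x c → ρ p c = ρ p' c := by
      intro c hc
      by_cases hcw : c = w
      · subst hcw; exact ih
      · refine below_eq hroot huniq hnpr hρ c p p' fun i => ?_
        rcases hcond i with h | ⟨s1, s2⟩
        · exact Or.inl h
        · refine Or.inr ⟨fun hs => ?_, fun hs => ?_⟩
          · rcases comp hroot huniq hnpr hs s1 with h' | h'
            · exact sibling_disj hroot huniq hnpr hc hstep hcw h' htail
            · by_cases hvc : v = c
              · exact sibling_disj hroot huniq hnpr hc hstep hcw (hvc ▸ sub_refl v) htail
              · exact hnvx (sub_parent_step huniq h' (Ne.symm hvc) hc)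
          · rcases comp hroot huniq hnpr hs s2 with h' | h'
            · exact sibling_disj hroot huniq hnpr hc hstep hcw h' htail
            · by_cases hvc : v = c
              · exact sibling_disj hroot huniq hnpr hc hstep hcw (hvc ▸ sub_refl v) htail
              · exact hnvx (sub_parent_step huniq h' (Ne.symm hvc) hc)
    rw [hρ p x, hρ p' x]
    have hl : (l x).map (ρ p) = (l x).map (ρ p') := by
      cases hlx : l x with
      | none => rfl
      | some c => simp [hchild c (Or.inl hlx)]
    have hr : (r x).map (ρ p) = (r x).map (ρ p') := by
      cases hrx : r x with
      | none => rfl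
      | some c => simp [hchild c (Or.inr hrx)]
    rw [hl, hr]
    congr 2
    funext i
    rcases hcond i with h | ⟨s1, s2⟩
    · rw [h]
    · have e1 : p i ≠ x := fun h => hnvx (h ▸ s1)
      have e2 : p' i ≠ x := fun h => hnvx (h ▸ s2)
      simp [e1, e2]

include hroot huniq hnpr hρ in
lemma key_pair {v : T} {u? : Option T} {b b' : T} (q0 : Q)
    (hb : b ∈ ctxSet l r (v, u?)) (hb' : b' ∈ ctxSet l r (v, u?))
    (hF : (fun q => ctxRun l r σ δ u? q b (KK l r root + 1) v)
        = (fun q => ctxRun l r σ δ u? q b' (KK l r root + 1) v))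
    (a : Fin rr → T) (haj : ∀ j, a j ∉ ctxSet l r (v, u?)) :
    ρ (Fin.snoc a b) root = ρ (Fin.snoc a b') root := by
  set qa : Q := u?.elim q0 (fun u => ρ (Fin.snoc a b) u) with hqa
  have hvmem : v ∈ ctxSet l r (v, u?) := by
    refine ⟨sub_refl v, fun u hu hs => ?_⟩
    exact hb.2 u hu (sub_trans hs hb.1)
  have hq : ∀ u ∈ u?, ρ (Fin.snoc a b) u = qa := by
    intro u hu
    cases u? with
    | none => simp at hu
    | some u' =>
      have : u = u' := by simpa using hu.symm
      subst this
      simp [hqa]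
  have hq' : ∀ u ∈ u?, ρ (Fin.snoc a b') u = qa := by
    intro u hu
    rw [← hq u hu]
    refine below_eq hroot huniq hnpr hρ u _ _ fun i => ?_
    refine Fin.lastCases ?_ (fun j => Or.inl ?_) i
    · rw [Fin.snoc_last, Fin.snoc_last]
      exact Or.inr ⟨hb'.2 u hu, hb.2 u hu⟩
    · rw [Fin.snoc_castSucc, Fin.snoc_castSucc]
  have e1 : ρ (Fin.snoc a b) v = ctxRun l r σ δ u? qa b (KK l r root + 1) v :=
    ctx_eq hroot huniq hnpr hρ hq haj _ v hvmem (by omega)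
  have e2 : ρ (Fin.snoc a b') v = ctxRun l r σ δ u? qa b' (KK l r root + 1) v :=
    ctx_eq hroot huniq hnpr hρ hq' haj _ v hvmem (by omega)
  have hveq : ρ (Fin.snoc a b) v = ρ (Fin.snoc a b') v := by
    rw [e1, e2]
    exact congrFun hF qa
  refine above_eq hroot huniq hnpr hρ _ _ (fun i => ?_) hveq root (hroot v)
  refine Fin.lastCases ?_ (fun j => Or.inl ?_) i
  · rw [Fin.snoc_last, Fin.snoc_last]
    exact Or.inr ⟨hb.1, hb'.1⟩
  · rw [Fin.snoc_castSucc, Fin.snoc_castSucc]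


end Auto

section C2

section Count

open scoped Classical

variable {l r : T → Option T} {root : T} (Y : Finset T)

@[simp] lemma mem_ctxSet_some {t v u : T} :
    t ∈ ctxSet l r (v, some u) ↔ sub l r v t ∧ ¬ sub l r u t := by
  simp [ctxSet]

@[simp] lemma mem_ctxSet_none {t v : T} : t ∈ ctxSet l r (v, none) ↔ sub l r v t := by
  simp [ctxSet]

noncomputable def cmark (l r : T → Option T) (Y : Finset T) (c : T × Option T) : ℕ :=
  (Y.filter (fun t => t ∈ ctxSet l r c)).card

noncomputable def gop (l r : T → Option T) (Y : Finset T) (o : Option T) : ℕ :=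
  o.elim 0 (fun c => cmark l r Y (c, none))

lemma cmark_self (x : T) : cmark l r Y (x, some x) = 0 := by
  rw [cmark, Finset.card_eq_zero]
  ext t
  simp only [Finset.mem_filter, mem_ctxSet_some, Finset.notMem_empty, iff_false]
  tauto

lemma cmark_chain {x c u : T} (hx : childOf l r x c) (hcu : sub l r c u) :
    cmark l r Y (x, some u) + cmark l r Y (c, none)
      = cmark l r Y (c, some u) + cmark l r Y (x, none) := by
  have hsub : Y.filter (fun t => t ∈ ctxSet l r (c, none))
      ⊆ Y.filter (fun t => t ∈ ctxSet l r (x, none)) := by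
    intro t ht
    simp only [Finset.mem_filter, mem_ctxSet_none] at ht ⊢
    exact ⟨ht.1, sub_trans (sub_of_childOf hx) ht.2⟩
  have hA : Y.filter (fun t => t ∈ ctxSet l r (x, some u))
      = Y.filter (fun t => t ∈ ctxSet l r (c, some u))
        ∪ (Y.filter (fun t => t ∈ ctxSet l r (x, none))
            \ Y.filter (fun t => t ∈ ctxSet l r (c, none))) := by
    ext t
    simp only [Finset.mem_union, Finset.mem_sdiff, Finset.mem_filter, mem_ctxSet_some,
      mem_ctxSet_none]
    have h1 : sub l r c t → sub l r x t := fun h => sub_trans (sub_of_childOf hx) h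
    have h2 : sub l r u t → sub l r c t := fun h => sub_trans hcu h
    tauto
  have hdisj : Disjoint (Y.filter (fun t => t ∈ ctxSet l r (c, some u)))
      (Y.filter (fun t => t ∈ ctxSet l r (x, none))
        \ Y.filter (fun t => t ∈ ctxSet l r (c, none))) := by
    rw [Finset.disjoint_left]
    intro t ht1 ht2
    simp only [Finset.mem_filter, mem_ctxSet_some, mem_ctxSet_none, Finset.mem_sdiff] at ht1 ht2
    exact ht2.2 ⟨ht1.1, ht1.2.1⟩
  have hle := Finset.card_le_card hsub
  rw [cmark, cmark, cmark, cmark, hA, Finset.card_union_of_disjoint hdisj,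
    Finset.card_sdiff_of_subset hsub]
  omega

lemma g_split (x : T) :
    cmark l r Y (x, none) ≤ gop l r Y (l x) + gop l r Y (r x) + 1 := by
  have hsub : Y.filter (fun t => t ∈ ctxSet l r (x, none))
      ⊆ insert x (((l x).elim ∅ (fun c => Y.filter (fun t => t ∈ ctxSet l r (c, none))))
        ∪ ((r x).elim ∅ (fun c => Y.filter (fun t => t ∈ ctxSet l r (c, none))))) := by
    intro t ht
    simp only [Finset.mem_filter, mem_ctxSet_none] at ht
    rcases Relation.ReflTransGen.cases_head ht.2 with h | ⟨w, hw, hwt⟩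
    · rw [← h]; exact Finset.mem_insert_self _ _
    · refine Finset.mem_insert_of_mem (Finset.mem_union.mpr ?_)
      rcases hw with hw | hw
      · exact Or.inl (by rw [hw]; simp only [Option.elim]; exact Finset.mem_filter.mpr ⟨ht.1, mem_ctxSet_none.mpr hwt⟩)
      · exact Or.inr (by rw [hw]; simp only [Option.elim]; exact Finset.mem_filter.mpr ⟨ht.1, mem_ctxSet_none.mpr hwt⟩)
  calc cmark l r Y (x, none) ≤ _ := Finset.card_le_card hsub
    _ ≤ _ + 1 := Finset.card_insert_le _ _
    _ ≤ _ := by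
        have := Finset.card_union_le
          ((l x).elim ∅ (fun c => Y.filter (fun t => t ∈ ctxSet l r (c, none))))
          ((r x).elim ∅ (fun c => Y.filter (fun t => t ∈ ctxSet l r (c, none))))
        have e1 : ((l x).elim ∅ (fun c => Y.filter (fun t => t ∈ ctxSet l r (c, none)))).card
            = gop l r Y (l x) := by cases l x <;> simp [gop, cmark]
        have e2 : ((r x).elim ∅ (fun c => Y.filter (fun t => t ∈ ctxSet l r (c, none)))).card
            = gop l r Y (r x) := by cases r x <;> simp [gop, cmark]
        omega

end Count

end C2


section Main

open scoped Classical

variable [Fintype T] {l r : T → Option T} {root : T} {Y : Finset T} {s : ℕ}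

def Inv (l r : T → Option T) (Y : Finset T) (s : ℕ) (x : T) : Prop :=
  ∃ (C : List (T × Option T)) (u : T),
    sub l r x u ∧
    (∀ c ∈ C, s ≤ cmark l r Y c) ∧
    (∀ c ∈ C, ctxSet l r c ⊆ {t | sub l r u t}) ∧
    C.Pairwise (fun c c' => Disjoint (ctxSet l r c) (ctxSet l r c')) ∧
    cmark l r Y (x, some u) + 1 ≤ s ∧
    cmark l r Y (x, none) + (2 * s - 1) ≤ (4 * s - 2) * C.length + cmark l r Y (x, some u)

variable (hroot : ∀ x, sub l r root x)
  (huniq : ∀ p p' x : T, childOf l r p x → childOf l r p' x → p = p')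
  (hnpr : ∀ p : T, l p ≠ some root ∧ r p ≠ some root)
  (hlr : ∀ x c : T, l x = some c → r x ≠ some c)

lemma chain_step (hs : 2 ≤ s) {x c : T} (hc : childOf l r x c)
    (hgx : cmark l r Y (x, none) ≤ cmark l r Y (c, none) + s)
    (hinv : Inv l r Y s c) : Inv l r Y s x := by
  obtain ⟨C, u, hu, hcm, hsubu, hpw, ho, hineq⟩ := hinv
  have hkey := cmark_chain Y hc hu
  set M := (4 * s - 2) * C.length with hM
  by_cases hclose : cmark l r Y (x, some u) + 1 ≤ s
  · exact ⟨C, u, sub_trans (sub_of_childOf hc) hu, hcm, hsubu, hpw, hclose, by omega⟩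
  · refine ⟨(x, some u) :: C, x, sub_refl x, ?_, ?_, ?_, ?_, ?_⟩
    · intro c' hc'
      rcases List.mem_cons.mp hc' with h | h
      · subst h; omega
      · exact hcm c' h
    · intro c' hc'
      rcases List.mem_cons.mp hc' with h | h
      · subst h; exact fun t ht => ht.1
      · exact fun t ht => sub_trans (sub_trans (sub_of_childOf hc) hu) (hsubu c' h ht)
    · rw [List.pairwise_cons]
      refine ⟨fun c' hc' => ?_, hpw⟩
      rw [Set.disjoint_left]
      intro t ht1 ht2
      exact ht1.2 u rfl (hsubu c' hc' ht2)
    · rw [cmark_self]; omega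
    · rw [cmark_self, List.length_cons, Nat.mul_add, Nat.mul_one]
      omega

lemma base_step (hs : 2 ≤ s) {x : T} (hx : s ≤ cmark l r Y (x, none))
    (h1 : gop l r Y (l x) + 1 ≤ s) (h2 : gop l r Y (r x) + 1 ≤ s) :
    Inv l r Y s x := by
  have hsp := g_split Y (l := l) (r := r) x
  refine ⟨[(x, none)], x, sub_refl x, ?_, ?_, ?_, ?_, ?_⟩
  · intro c hc
    rcases List.mem_singleton.mp hc with h
    subst h; exact hx
  · intro c hc
    rcases List.mem_singleton.mp hc with h
    subst h; exact fun t ht => ht.1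
  · exact List.pairwise_singleton _ _
  · rw [cmark_self]; omega
  · rw [cmark_self, List.length_singleton, Nat.mul_one]
    omega

include hlr in
lemma branch_step (hs : 2 ≤ s) {x c1 c2 : T} (h1 : l x = some c1) (h2 : r x = some c2)
    (hroot' : ∀ x, sub l r root x)
    (huniq' : ∀ p p' x : T, childOf l r p x → childOf l r p' x → p = p')
    (hnpr' : ∀ p : T, l p ≠ some root ∧ r p ≠ some root)
    (hinv1 : Inv l r Y s c1) (hinv2 : Inv l r Y s c2) : Inv l r Y s x := by
  obtain ⟨C1, u1, hu1, hcm1, hsub1, hpw1, ho1, hineq1⟩ := hinv1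
  obtain ⟨C2, u2, hu2, hcm2, hsub2, hpw2, ho2, hineq2⟩ := hinv2
  have hne : c1 ≠ c2 := fun h => hlr x c1 h1 (h ▸ h2)
  have hsp := g_split Y (l := l) (r := r) x
  have hgop1 : gop l r Y (l x) = cmark l r Y (c1, none) := by rw [h1]; rfl
  have hgop2 : gop l r Y (r x) = cmark l r Y (c2, none) := by rw [h2]; rfl
  refine ⟨C1 ++ C2, x, sub_refl x, ?_, ?_, ?_, ?_, ?_⟩
  · intro c hc
    rcases List.mem_append.mp hc with h | h
    · exact hcm1 c h
    · exact hcm2 c h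
  · intro c hc t ht
    rcases List.mem_append.mp hc with h | h
    · exact sub_trans (sub_of_childOf (Or.inl h1)) (sub_trans hu1 (hsub1 c h ht))
    · exact sub_trans (sub_of_childOf (Or.inr h2)) (sub_trans hu2 (hsub2 c h ht))
  · rw [List.pairwise_append]
    refine ⟨hpw1, hpw2, fun c hc c' hc' => ?_⟩
    rw [Set.disjoint_left]
    intro t ht1 ht2
    have hs1 : sub l r c1 t := sub_trans hu1 (hsub1 c hc ht1)
    have hs2 : sub l r c2 t := sub_trans hu2 (hsub2 c' hc' ht2)
    exact sibling_disj hroot' huniq' hnpr' (Or.inl h1) (Or.inr h2) hne hs1 hs2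
  · rw [cmark_self]; omega
  · rw [cmark_self, List.length_append, Nat.mul_add]
    omega

include hroot huniq hnpr hlr in
lemma main_inv (hs : 2 ≤ s) : ∀ x, s ≤ cmark l r Y (x, none) → Inv l r Y s x := by
  refine btind hroot huniq hnpr _ ?_
  intro x ih hx
  by_cases hL : ∃ c, l x = some c ∧ s ≤ cmark l r Y (c, none)
  · obtain ⟨c1, h1, hg1⟩ := hL
    by_cases hR : ∃ c, r x = some c ∧ s ≤ cmark l r Y (c, none)
    · obtain ⟨c2, h2, hg2⟩ := hR
      exact branch_step hlr hs h1 h2 hroot huniq hnpr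
        (ih c1 (Or.inl h1) hg1) (ih c2 (Or.inr h2) hg2)
    · refine chain_step hs (Or.inl h1) ?_ (ih c1 (Or.inl h1) hg1)
      have hsp := g_split Y (l := l) (r := r) x
      have hgop1 : gop l r Y (l x) = cmark l r Y (c1, none) := by rw [h1]; rfl
      have hR' : gop l r Y (r x) + 1 ≤ s := by
        cases hrx : r x with
        | none => simp [gop]; omega
        | some c2 =>
          by_contra hcon
          exact hR ⟨c2, hrx, by simp [gop, hrx] at hcon ⊢; omega⟩
      omega
  · by_cases hR : ∃ c, r x = some c ∧ s ≤ cmark l r Y (c, none)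
    · obtain ⟨c2, h2, hg2⟩ := hR
      refine chain_step hs (Or.inr h2) ?_ (ih c2 (Or.inr h2) hg2)
      have hsp := g_split Y (l := l) (r := r) x
      have hgop2 : gop l r Y (r x) = cmark l r Y (c2, none) := by rw [h2]; rfl
      have hL' : gop l r Y (l x) + 1 ≤ s := by
        cases hlx : l x with
        | none => simp [gop]; omega
        | some c1 =>
          by_contra hcon
          exact hL ⟨c1, hlx, by simp [gop, hlx] at hcon ⊢; omega⟩
      omega
    · refine base_step hs hx ?_ ?_
      · cases hlx : l x with
        | none => simp [gop]; omega
        | some c1 =>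
          by_contra hcon
          exact hL ⟨c1, hlx, by simp [gop, hlx] at hcon ⊢; omega⟩
      · cases hrx : r x with
        | none => simp [gop]; omega
        | some c2 =>
          by_contra hcon
          exact hR ⟨c2, hrx, by simp [gop, hrx] at hcon ⊢; omega⟩

end Main

end Stmt12Aux

/-- Lemma 3.2: let A be a deterministic bottom-up tree automaton (transition
function δ) with m states over the alphabet Σ × {0,1}^(r+1), running on a finite
rooted binary Σ-labeled tree 𝒯, and let Y be a set of nodes with
|Y| ≥ 2m^m + 2. Then there exist n = ⌊|Y| / (4m^m + 4)⌋ pairwise disjoint sets of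
nodes V_1, …, V_n and pairs (b_i, b_i') of distinct nodes of V_i ∩ Y such that
for every r-tuple ā of nodes and every i, if no component of ā lies in V_i, then
the runs of A with pebbles at (ā, b_i) and at (ā, b_i') label the root with the
same state. Here `ρ p` denotes the run of A with the r+1 pebbles placed at `p`. -/
theorem stmt12 {T Q Sig : Type*} [Fintype T] [DecidableEq T] [Fintype Q]
    {m rr : ℕ} (hQ : Fintype.card Q = m)
    (l r : T → Option T) (σ : T → Sig) (root : T)
    (hroot : ∀ x : T,
      Relation.ReflTransGen (fun p c => l p = some c ∨ r p = some c) root x)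
    (hnoparentroot : ∀ p : T, l p ≠ some root ∧ r p ≠ some root)
    (huniqparent : ∀ p p' x : T, (l p = some x ∨ r p = some x) →
      (l p' = some x ∨ r p' = some x) → p = p')
    (hlr : ∀ x c : T, l x = some c → r x ≠ some c)
    (δ : Option Q → Option Q → Sig × (Fin (rr + 1) → Bool) → Q)
    (ρ : (Fin (rr + 1) → T) → T → Q)
    (hρ : ∀ (p : Fin (rr + 1) → T) (x : T),
      ρ p x = δ ((l x).map (ρ p)) ((r x).map (ρ p))
        (σ x, fun i => if p i = x then true else false))
    (Y : Finset T) (hY : 2 * m ^ m + 2 ≤ Y.card) :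
    ∃ V : Fin (Y.card / (4 * m ^ m + 4)) → Set T,
      (∀ i j, i ≠ j → Disjoint (V i) (V j)) ∧
      ∃ b b' : Fin (Y.card / (4 * m ^ m + 4)) → T,
        ∀ i, b i ∈ V i ∧ b' i ∈ V i ∧ b i ∈ Y ∧ b' i ∈ Y ∧ b i ≠ b' i ∧
          ∀ a : Fin rr → T, (∀ j, a j ∉ V i) →
            ρ (Fin.snoc a (b i)) root = ρ (Fin.snoc a (b' i)) root := by
  classical
  open Stmt12Aux in
  have hroot' : ∀ x, Stmt12Aux.sub l r root x := hroot
  have huniq' : ∀ p p' x : T, Stmt12Aux.childOf l r p x → Stmt12Aux.childOf l r p' x → p = p' :=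
    huniqparent
  have q0 : Q := ρ (fun _ => root) root
  have hm : 1 ≤ m := by
    by_contra h
    have hm0 : m = 0 := by omega
    rw [hm0] at hQ
    rw [Fintype.card_eq_zero_iff] at hQ
    exact hQ.false q0
  have hmm : 1 ≤ m ^ m := Nat.one_le_pow _ _ hm
  set s : ℕ := m ^ m + 1 with hs_def
  have hs2 : 2 ≤ s := by omega
  have hgroot : Stmt12Aux.cmark l r Y (root, none) = Y.card := by
    rw [Stmt12Aux.cmark]
    rw [Finset.filter_true_of_mem]
    intro t ht
    simpa using hroot' t
  obtain ⟨C, u, -, hcm, -, hpw, ho, hineq⟩ :=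
    Stmt12Aux.main_inv (Y := Y) hroot' huniq' hnoparentroot hlr hs2 root (by omega)
  set n := Y.card / (4 * m ^ m + 4) with hn_def
  have h4s : 4 * m ^ m + 4 = 4 * s := by omega
  have hnk : n ≤ C.length := by
    rw [hgroot] at hineq
    have hmul : 4 * s * n ≤ Y.card := by
      rw [hn_def, h4s, mul_comm]
      exact Nat.div_mul_le_self _ _
    by_contra hcon
    have hn1 : C.length + 1 ≤ n := by omega
    have h1 : 4 * s * (C.length + 1) ≤ 4 * s * n := Nat.mul_le_mul_left _ hn1
    have h2 : (4 * s - 2) * C.length ≤ 4 * s * C.length :=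
      Nat.mul_le_mul_right _ (by omega)
    rw [Nat.mul_add, Nat.mul_one] at h1
    omega
  have hilt : ∀ i : Fin n, (i : ℕ) < C.length := fun i => lt_of_lt_of_le i.isLt hnk
  set getc : Fin n → T × Option T := fun i => C.get ⟨i, hilt i⟩ with hgetc
  have hpig : ∀ i : Fin n, ∃ bb bb' : T, bb ∈ Y ∧ bb' ∈ Y ∧
      bb ∈ Stmt12Aux.ctxSet l r (getc i) ∧ bb' ∈ Stmt12Aux.ctxSet l r (getc i) ∧ bb ≠ bb' ∧
      (fun q => Stmt12Aux.ctxRun l r σ δ (getc i).2 q bb (Stmt12Aux.KK l r root + 1) (getc i).1)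
        = (fun q => Stmt12Aux.ctxRun l r σ δ (getc i).2 q bb'
            (Stmt12Aux.KK l r root + 1) (getc i).1) := by
    intro i
    have hcard : s ≤ Stmt12Aux.cmark l r Y (getc i) :=
      hcm _ (List.get_mem C ⟨i, hilt i⟩)
    have hflt : (Finset.univ : Finset (Q → Q)).card
        < (Y.filter (fun t => t ∈ Stmt12Aux.ctxSet l r (getc i))).card := by
      rw [Finset.card_univ, Fintype.card_fun, hQ]
      rw [Stmt12Aux.cmark] at hcard
      omega
    obtain ⟨bb, hbb, bb', hbb', hne, heq⟩ :=
      Finset.exists_ne_map_eq_of_card_lt_of_maps_to hflt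
        (f := fun t => (fun q => Stmt12Aux.ctxRun l r σ δ (getc i).2 q t
          (Stmt12Aux.KK l r root + 1) (getc i).1))
        (fun a _ => Finset.mem_univ _)
    rw [Finset.mem_filter] at hbb hbb'
    exact ⟨bb, bb', hbb.1, hbb'.1, hbb.2, hbb'.2, hne, heq⟩
  choose bb bb' hbY hbY' hbC hbC' hbne hbF using hpig
  refine ⟨fun i => Stmt12Aux.ctxSet l r (getc i), ?_, bb, bb', ?_⟩
  · intro i j hij
    rcases lt_or_gt_of_ne (fun h : (i : ℕ) = (j : ℕ) => hij (Fin.ext h)) with h | h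
    · exact (List.pairwise_iff_get.mp hpw ⟨i, hilt i⟩ ⟨j, hilt j⟩ h)
    · exact (List.pairwise_iff_get.mp hpw ⟨j, hilt j⟩ ⟨i, hilt i⟩ h).symm
  · intro i
    refine ⟨hbC i, hbC' i, hbY i, hbY' i, hbne i, ?_⟩
    intro a haj
    exact Stmt12Aux.key_pair hroot' huniq' hnoparentroot hρ q0 (hbC i) (hbC' i) (hbF i) a haj
end
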